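/- Let H be the set of n×n upper triangular matrices over R_ε of the form h^θ(a) with diagonal entries e^{iθ} and (j,j+k)-entry a_k ε^k for 1 ≤ k ≤ n−1, where θ ∈ ℝ and a = (a₁,...,a_{n−1}) ∈ ℂ^{n−1}. Then H is a subgroup of the unit group of M_n(R_ε). -/
import Mathlib


/- R_ε := ℂ ⊕ ℂε, encoded as ℂ × ℂ. H is the set of upper triangular matrices
   h^θ(a) over R_ε with diagonal entries e^{iθ} and (j, j+k)-entry a_k ε^k. -/
noncomputable section
open Complex

abbrev Reps : Type := ℂ × ℂ

def Rmul (x y : Reps) : Reps :=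
  (x.1 * y.1 + x.2 * (starRingEnd ℂ) y.2, x.2 * (starRingEnd ℂ) y.1 + x.1 * y.2)

def Rone : Reps := (1, 0)

def Mmul {n : ℕ} (A B : Matrix (Fin n) (Fin n) Reps) : Matrix (Fin n) (Fin n) Reps :=
  fun i j => ∑ k : Fin n, Rmul (A i k) (B k j)

def MoneR (n : ℕ) : Matrix (Fin n) (Fin n) Reps :=
  fun i j => if i = j then Rone else 0

/-- a·ε^m ∈ R_ε : equals (a,0) if m is even (ε^m = 1) and (0,a) if m is odd (ε^m = ε) -/
def epsPow (a : ℂ) (m : ℕ) : Reps := if m % 2 = 0 then (a, 0) else (0, a)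

/-- the matrix h^θ(a): diagonal e^{iθ}, (i,j)-entry a_{j-i} ε^{j-i} above the diagonal -/
def hmat (n : ℕ) (θ : ℝ) (a : ℕ → ℂ) : Matrix (Fin n) (Fin n) Reps :=
  fun i j =>
    if i = j then (Complex.exp (θ * I), 0)
    else if (i : ℕ) < (j : ℕ) then epsPow (a ((j : ℕ) - (i : ℕ))) ((j : ℕ) - (i : ℕ))
    else 0

def Hset (n : ℕ) : Set (Matrix (Fin n) (Fin n) Reps) :=
  {A | ∃ (θ : ℝ) (a : ℕ → ℂ), A = hmat n θ a}

-- auxiliary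
def conjPow (k : ℕ) (z : ℂ) : ℂ := if k % 2 = 0 then z else (starRingEnd ℂ) z

def ext' (θ : ℝ) (a : ℕ → ℂ) (m : ℕ) : ℂ := if m = 0 then Complex.exp (θ * I) else a m

def convo (θ φ : ℝ) (a b : ℕ → ℂ) (m : ℕ) : ℂ :=
  ∑ k ∈ Finset.range (m + 1), ext' θ a k * conjPow k (ext' φ b (m - k))

lemma Rmul_zero_left (y : Reps) : Rmul 0 y = 0 := by
  simp [Rmul, Prod.ext_iff]

lemma Rmul_zero_right (x : Reps) : Rmul x 0 = 0 := by
  simp [Rmul, Prod.ext_iff]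

lemma Rmul_one_right (x : Reps) : Rmul x Rone = x := by
  simp [Rmul, Rone, Prod.ext_iff]

lemma Rmul_add_left (x y z : Reps) : Rmul (x + y) z = Rmul x z + Rmul y z := by
  simp [Rmul, Prod.ext_iff]; constructor <;> ring

lemma Rmul_add_right (x y z : Reps) : Rmul x (y + z) = Rmul x y + Rmul x z := by
  simp [Rmul, Prod.ext_iff, map_add]; constructor <;> ring

lemma Rmul_assoc (x y z : Reps) : Rmul (Rmul x y) z = Rmul x (Rmul y z) := by
  simp [Rmul, Prod.ext_iff, map_add, map_mul]; constructor <;> ring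

lemma Rmul_sum_left {ι : Type*} (s : Finset ι) (f : ι → Reps) (y : Reps) :
    Rmul (∑ i ∈ s, f i) y = ∑ i ∈ s, Rmul (f i) y := by
  induction s using Finset.cons_induction with
  | empty => simp [Rmul_zero_left]
  | cons a s ha ih => simp [Finset.sum_cons, Rmul_add_left, ih]

lemma Rmul_sum_right {ι : Type*} (s : Finset ι) (f : ι → Reps) (x : Reps) :
    Rmul x (∑ i ∈ s, f i) = ∑ i ∈ s, Rmul x (f i) := by
  induction s using Finset.cons_induction with
  | empty => simp [Rmul_zero_right]
  | cons a s ha ih => simp [Finset.sum_cons, Rmul_add_right, ih]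

lemma Mmul_assoc {n : ℕ} (A B C : Matrix (Fin n) (Fin n) Reps) :
    Mmul (Mmul A B) C = Mmul A (Mmul B C) := by
  funext i j
  show ∑ k : Fin n, Rmul (∑ l : Fin n, Rmul (A i l) (B l k)) (C k j)
      = ∑ l : Fin n, Rmul (A i l) (∑ k : Fin n, Rmul (B l k) (C k j))
  simp only [Rmul_sum_left, Rmul_sum_right, Rmul_assoc]
  exact Finset.sum_comm

lemma Mmul_one {n : ℕ} (A : Matrix (Fin n) (Fin n) Reps) : Mmul A (MoneR n) = A := by
  funext i j
  show ∑ k : Fin n, Rmul (A i k) (if k = j then Rone else 0) = A i j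
  rw [Finset.sum_congr rfl (fun k _ => apply_ite (Rmul (A i k)) (k = j) Rone 0)]
  simp [Rmul_one_right, Rmul_zero_right]

lemma one_Mmul {n : ℕ} (A : Matrix (Fin n) (Fin n) Reps) : Mmul (MoneR n) A = A := by
  funext i j
  show ∑ k : Fin n, Rmul (if i = k then Rone else 0) (A k j) = A i j
  have : ∀ k : Fin n, Rmul (if i = k then Rone else 0) (A k j)
      = if i = k then Rmul Rone (A k j) else 0 := by
    intro k; split <;> simp [Rmul_zero_left]
  rw [Finset.sum_congr rfl (fun k _ => this k)]
  simp [Rmul, Rone, Prod.ext_iff]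

lemma epsPow_zero (m : ℕ) : epsPow 0 m = 0 := by
  unfold epsPow; split <;> rfl

lemma epsPow_smul (a : ℂ) (d : ℕ) :
    epsPow a d = a • (if d % 2 = 0 then ((1 : ℂ), (0 : ℂ)) else (0, 1)) := by
  unfold epsPow; split <;> simp [Prod.ext_iff]

lemma epsPow_sum {ι : Type*} (s : Finset ι) (f : ι → ℂ) (d : ℕ) :
    ∑ t ∈ s, epsPow (f t) d = epsPow (∑ t ∈ s, f t) d := by
  simp only [epsPow_smul, ← Finset.sum_smul]

lemma Rmul_epsPow (a b : ℂ) (m l : ℕ) :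
    Rmul (epsPow a m) (epsPow b l) = epsPow (a * conjPow m b) (m + l) := by
  rcases Nat.mod_two_eq_zero_or_one m with hm | hm <;>
    rcases Nat.mod_two_eq_zero_or_one l with hl | hl <;>
      simp [epsPow, Rmul, conjPow, Nat.add_mod, hm, hl, Prod.ext_iff, mul_comm]

lemma hmat_apply (n : ℕ) (θ : ℝ) (a : ℕ → ℂ) (i j : Fin n) :
    hmat n θ a i j =
      if (i : ℕ) ≤ (j : ℕ) then epsPow (ext' θ a ((j : ℕ) - (i : ℕ))) ((j : ℕ) - (i : ℕ))
      else 0 := by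
  unfold hmat
  by_cases h : i = j
  · subst h
    simp [epsPow, ext']
  · have h' : (i : ℕ) ≠ (j : ℕ) := fun hc => h (Fin.ext hc)
    simp only [if_neg h]
    by_cases h2 : (i : ℕ) < (j : ℕ)
    · have h3 : (j : ℕ) - (i : ℕ) ≠ 0 := by omega
      simp [h2, le_of_lt h2, ext', h3]
    · have h4 : ¬ (i : ℕ) ≤ (j : ℕ) := by omega
      simp [h2, h4]

lemma Mmul_hmat (n : ℕ) (θ φ : ℝ) (a b : ℕ → ℂ) :
    Mmul (hmat n θ a) (hmat n φ b) = hmat n (θ + φ) (convo θ φ a b) := by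
  funext i j
  show ∑ k : Fin n, Rmul (hmat n θ a i k) (hmat n φ b k j) = _
  have step : ∀ k : Fin n, Rmul (hmat n θ a i k) (hmat n φ b k j)
      = if (i : ℕ) ≤ (k : ℕ) ∧ (k : ℕ) ≤ (j : ℕ) then
          epsPow (ext' θ a ((k : ℕ) - (i : ℕ)) *
            conjPow ((k : ℕ) - (i : ℕ)) (ext' φ b ((j : ℕ) - (k : ℕ)))) ((j : ℕ) - (i : ℕ))
        else 0 := by
    intro k
    rw [hmat_apply, hmat_apply]
    by_cases h1 : (i : ℕ) ≤ (k : ℕ)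
    · by_cases h2 : (k : ℕ) ≤ (j : ℕ)
      · rw [if_pos h1, if_pos h2, if_pos ⟨h1, h2⟩, Rmul_epsPow]
        congr 1
        omega
      · have hnot : ¬((i : ℕ) ≤ (k : ℕ) ∧ (k : ℕ) ≤ (j : ℕ)) := by omega
        rw [if_neg h2, if_neg hnot, Rmul_zero_right]
    · have hnot : ¬((i : ℕ) ≤ (k : ℕ) ∧ (k : ℕ) ≤ (j : ℕ)) := by omega
      rw [if_neg h1, if_neg hnot, Rmul_zero_left]
  rw [Finset.sum_congr rfl (fun k _ => step k)]
  rw [Fin.sum_univ_eq_sum_range (fun k => if (i : ℕ) ≤ k ∧ k ≤ (j : ℕ) then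
        epsPow (ext' θ a (k - (i : ℕ)) *
          conjPow (k - (i : ℕ)) (ext' φ b ((j : ℕ) - k))) ((j : ℕ) - (i : ℕ)) else 0)]
  rw [← Finset.sum_filter]
  have hIcc : (Finset.range n).filter (fun k => (i : ℕ) ≤ k ∧ k ≤ (j : ℕ))
      = Finset.Ico (i : ℕ) ((j : ℕ) + 1) := by
    ext k
    simp only [Finset.mem_filter, Finset.mem_range, Finset.mem_Ico]
    have := j.isLt
    omega
  rw [hIcc]
  by_cases hij : (i : ℕ) ≤ (j : ℕ)
  · rw [Finset.sum_Ico_eq_sum_range]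
    have hcongr : ∀ t ∈ Finset.range ((j : ℕ) + 1 - (i : ℕ)),
        epsPow (ext' θ a ((i : ℕ) + t - (i : ℕ)) *
          conjPow ((i : ℕ) + t - (i : ℕ)) (ext' φ b ((j : ℕ) - ((i : ℕ) + t)))) ((j : ℕ) - (i : ℕ))
        = epsPow (ext' θ a t * conjPow t (ext' φ b (((j : ℕ) - (i : ℕ)) - t))) ((j : ℕ) - (i : ℕ)) := by
      intro t ht
      simp only [Finset.mem_range] at ht
      have e1 : (i : ℕ) + t - (i : ℕ) = t := by omega
      have e2 : (j : ℕ) - ((i : ℕ) + t) = ((j : ℕ) - (i : ℕ)) - t := by omega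
      rw [e1, e2]
    rw [Finset.sum_congr rfl hcongr]
    have hrange : (j : ℕ) + 1 - (i : ℕ) = ((j : ℕ) - (i : ℕ)) + 1 := by omega
    rw [hrange, epsPow_sum]
    have : (∑ t ∈ Finset.range (((j : ℕ) - (i : ℕ)) + 1),
        ext' θ a t * conjPow t (ext' φ b (((j : ℕ) - (i : ℕ)) - t)))
        = convo θ φ a b ((j : ℕ) - (i : ℕ)) := rfl
    rw [this]
    by_cases h : i = j
    · subst h
      have hc : convo θ φ a b 0 = Complex.exp (((θ + φ : ℝ) : ℂ) * I) := by
        simp [convo, ext', conjPow, ← Complex.exp_add]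
        ring_nf
      simp [Nat.sub_self, hc, hmat, epsPow]
    · have hlt : (i : ℕ) < (j : ℕ) := lt_of_le_of_ne hij (fun hc => h (Fin.ext hc))
      unfold hmat
      rw [if_neg h, if_pos hlt]
  · have hempty : Finset.Ico (i : ℕ) ((j : ℕ) + 1) = ∅ := by
      rw [Finset.Ico_eq_empty_iff]; omega
    rw [hempty, Finset.sum_empty]
    have h : i ≠ j := fun hc => hij (le_of_eq (by rw [hc]))
    have h2 : ¬ (i : ℕ) < (j : ℕ) := by omega
    unfold hmat
    rw [if_neg h, if_neg h2]

def binv (θ : ℝ) (a : ℕ → ℂ) : ℕ → ℂ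
  | 0 => 0
  | (t+1) => -Complex.exp ((-θ : ℝ) * I) *
      ((∑ j ∈ Finset.range t, a (j+1) * conjPow (j+1) (binv θ a (t - j))) +
        a (t+1) * conjPow (t+1) (Complex.exp ((-θ : ℝ) * I)))
  termination_by m => m
  decreasing_by exact Nat.lt_succ_of_le (Nat.sub_le _ _)

lemma convo_binv (θ : ℝ) (a : ℕ → ℂ) (m : ℕ) (hm : 1 ≤ m) :
    convo θ (-θ) a (binv θ a) m = 0 := by
  obtain ⟨t, rfl⟩ : ∃ t, m = t + 1 := ⟨m - 1, by omega⟩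
  unfold convo
  rw [Finset.sum_range_succ', Finset.sum_range_succ]
  have h0 : ext' θ a 0 * conjPow 0 (ext' (-θ) (binv θ a) (t + 1 - 0))
      = Complex.exp ((θ : ℝ) * I) * binv θ a (t + 1) := by
    simp [ext', conjPow]
  have htop : ext' θ a (t + 1) * conjPow (t + 1) (ext' (-θ) (binv θ a) (t + 1 - (t + 1)))
      = a (t + 1) * conjPow (t + 1) (Complex.exp ((-θ : ℝ) * I)) := by
    simp [ext']
  have hmid : ∀ j ∈ Finset.range t,
      ext' θ a (j + 1) * conjPow (j + 1) (ext' (-θ) (binv θ a) (t + 1 - (j + 1)))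
      = a (j + 1) * conjPow (j + 1) (binv θ a (t - j)) := by
    intro j hj
    simp only [Finset.mem_range] at hj
    have h1 : t + 1 - (j + 1) = t - j := by omega
    have h2 : t - j ≠ 0 := by omega
    simp [ext', h1, h2]
  rw [h0, htop, Finset.sum_congr rfl hmid]
  rw [show binv θ a (t + 1) = -Complex.exp ((-θ : ℝ) * I) *
      ((∑ j ∈ Finset.range t, a (j+1) * conjPow (j+1) (binv θ a (t - j))) +
        a (t+1) * conjPow (t+1) (Complex.exp ((-θ : ℝ) * I))) from by rw [binv]]
  have hexp : Complex.exp ((θ : ℝ) * I) * Complex.exp ((-θ : ℝ) * I) = 1 := by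
    rw [← Complex.exp_add]
    push_cast
    ring_nf
    exact Complex.exp_zero
  set S := (∑ j ∈ Finset.range t, a (j+1) * conjPow (j+1) (binv θ a (t - j))) +
      a (t+1) * conjPow (t+1) (Complex.exp ((-θ : ℝ) * I)) with hS
  calc (∑ j ∈ Finset.range t, a (j+1) * conjPow (j+1) (binv θ a (t - j)))
        + a (t+1) * conjPow (t+1) (Complex.exp ((-θ : ℝ) * I))
        + Complex.exp ((θ : ℝ) * I) * (-Complex.exp ((-θ : ℝ) * I) * S)
      = S - (Complex.exp ((θ : ℝ) * I) * Complex.exp ((-θ : ℝ) * I)) * S := by rw [hS]; ring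
    _ = 0 := by rw [hexp]; ring

lemma hmat_eq_one (n : ℕ) (c : ℕ → ℂ) (h : ∀ m, 1 ≤ m → c m = 0) :
    hmat n 0 c = MoneR n := by
  funext i j
  unfold hmat MoneR
  by_cases hij : i = j
  · simp [hij, Rone]
  · rw [if_neg hij, if_neg hij]
    by_cases hlt : (i : ℕ) < (j : ℕ)
    · rw [if_pos hlt, h _ (by omega), epsPow_zero]
    · rw [if_neg hlt]

/-- H is a subgroup of the unit group of M_n(R_ε): it contains the identity, is
closed under multiplication, and every element has an inverse lying in H. -/
theorem stmt8 (n : ℕ) :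
    MoneR n ∈ Hset n ∧
    (∀ A ∈ Hset n, ∀ B ∈ Hset n, Mmul A B ∈ Hset n) ∧
    (∀ A ∈ Hset n, ∃ B ∈ Hset n, Mmul A B = MoneR n ∧ Mmul B A = MoneR n) := by
  have hone : ∀ θ : ℝ, ∀ a : ℕ → ℂ,
      Mmul (hmat n θ a) (hmat n (-θ) (binv θ a)) = MoneR n := by
    intro θ a
    rw [Mmul_hmat, show θ + -θ = 0 from by ring]
    exact hmat_eq_one n _ (fun m hm => convo_binv θ a m hm)
  refine ⟨⟨0, fun _ => 0, (hmat_eq_one n (fun _ => 0) (fun _ _ => rfl)).symm⟩, ?_, ?_⟩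
  · rintro A ⟨θ, a, rfl⟩ B ⟨φ, b, rfl⟩
    exact ⟨θ + φ, convo θ φ a b, Mmul_hmat n θ φ a b⟩
  · rintro A ⟨θ, a, rfl⟩
    set B := hmat n (-θ) (binv θ a) with hB
    set C := hmat n (- -θ) (binv (-θ) (binv θ a)) with hC
    have hAB : Mmul (hmat n θ a) B = MoneR n := hone θ a
    have hBC : Mmul B C = MoneR n := hone (-θ) (binv θ a)
    have hCA : hmat n θ a = C := by
      calc hmat n θ a = Mmul (hmat n θ a) (MoneR n) := (Mmul_one _).symm
        _ = Mmul (hmat n θ a) (Mmul B C) := by rw [hBC]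
        _ = Mmul (Mmul (hmat n θ a) B) C := (Mmul_assoc _ _ _).symm
        _ = Mmul (MoneR n) C := by rw [hAB]
        _ = C := one_Mmul C
    refine ⟨B, ⟨-θ, binv θ a, rfl⟩, hAB, ?_⟩
    rw [hCA]
    exact hBC
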